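/- For U ∈ SU(2), define n(U) ∈ ℝ³ by n(U)ᵢ = −(1/2)·Re tr(ωᵢ Uᴴ ω₃ U) for i = 1, 2, 3 (the trace here is in fact real). Then: (1) n(U) is a unit vector for every U ∈ SU(2); (2) the map n is surjective onto the unit sphere S² ⊂ ℝ³; and (3) for U, V ∈ SU(2), n(U) = n(V) if and only if V·U⁻¹ is a diagonal matrix (equivalently, V·U⁻¹ = diag(e^{−iθ}, e^{iθ}) for some real θ). Hence n induces a bijection between the coset space A\SU(2), where A is the subgroup of diagonal matrices in SU(2), and the unit sphere S². -/

import Mathlib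

/-- The matrices `ωⱼ = −i σⱼ` (for the Pauli matrices `σⱼ`):
`ω₁ = [[0, −i], [−i, 0]]`, `ω₂ = [[0, −1], [1, 0]]`, `ω₃ = [[−i, 0], [0, i]]`. -/
def omegaMat : Fin 3 → Matrix (Fin 2) (Fin 2) ℂ :=
  ![!![0, -Complex.I; -Complex.I, 0],
    !![0, -1; 1, 0],
    !![-Complex.I, 0; 0, Complex.I]]

/-- The vector `n(U) ∈ ℝ³`, `n(U)ᵢ = −(1/2)·Re tr(ωᵢ Uᴴ ω₃ U)`. -/
noncomputable def nvec (U : Matrix (Fin 2) (Fin 2) ℂ) : Fin 3 → ℝ :=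
  fun i => -(1 / 2 : ℝ) * ((omegaMat i * U.conjTranspose * omegaMat 2 * U).trace).re

section SU2Aux
open Complex Matrix

noncomputable def su2mat (a b : ℂ) : Matrix (Fin 2) (Fin 2) ℂ :=
  !![a, b; -(starRingEnd ℂ) b, (starRingEnd ℂ) a]

lemma su2_form {U : Matrix (Fin 2) (Fin 2) ℂ} (h1 : U.conjTranspose * U = 1) (h2 : U.det = 1) :
    U = su2mat (U 0 0) (U 0 1) := by
  have hinv : U⁻¹ = U.conjTranspose := Matrix.inv_eq_left_inv h1
  have hadj : U⁻¹ = !![U 1 1, -U 0 1; -U 1 0, U 0 0] := by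
    rw [Matrix.inv_def, h2, Matrix.adjugate_fin_two]; simp
  have key : U.conjTranspose = !![U 1 1, -U 0 1; -U 1 0, U 0 0] := by rw [← hinv, hadj]
  have e1 : (starRingEnd ℂ) (U 0 0) = U 1 1 := by
    have := congrFun (congrFun key 0) 0; simpa [Matrix.conjTranspose_apply] using this
  have e2 : (starRingEnd ℂ) (U 1 0) = -U 0 1 := by
    have := congrFun (congrFun key 0) 1; simpa [Matrix.conjTranspose_apply] using this
  have e2' : U 1 0 = -(starRingEnd ℂ) (U 0 1) := by
    have := congrArg (starRingEnd ℂ) e2; simpa using this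
  ext i j
  fin_cases i <;> fin_cases j <;> simp [su2mat, ← e1, e2']

lemma su2_normSq {U : Matrix (Fin 2) (Fin 2) ℂ} (h1 : U.conjTranspose * U = 1) (h2 : U.det = 1) :
    Complex.normSq (U 0 0) + Complex.normSq (U 0 1) = 1 := by
  have hf := su2_form h1 h2
  set a := U 0 0; set b := U 0 1
  have hd : U.det = a * (starRingEnd ℂ) a + b * (starRingEnd ℂ) b := by
    rw [hf]; simp [su2mat, Matrix.det_fin_two_of]
  rw [h2] at hd
  have := congrArg Complex.re hd.symm
  simpa [Complex.mul_conj] using this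

lemma su2mat_conjT (a b : ℂ) :
    (su2mat a b).conjTranspose = !![(starRingEnd ℂ) a, -b; (starRingEnd ℂ) b, a] := by
  ext i j
  fin_cases i <;> fin_cases j <;> simp [su2mat, Matrix.conjTranspose_apply]

lemma su2_mem (a b : ℂ) (h : Complex.normSq a + Complex.normSq b = 1) :
    (su2mat a b).conjTranspose * su2mat a b = 1 ∧ (su2mat a b).det = 1 := by
  have hC : ((Complex.normSq a : ℂ)) + ((Complex.normSq b : ℂ)) = 1 := by
    exact_mod_cast h
  have e : (starRingEnd ℂ) a * a + b * (starRingEnd ℂ) b = 1 := by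
    rw [mul_comm ((starRingEnd ℂ) a) a, Complex.mul_conj, Complex.mul_conj]
    exact hC
  constructor
  · rw [su2mat_conjT, show su2mat a b = !![a, b; -(starRingEnd ℂ) b, (starRingEnd ℂ) a] from rfl,
      Matrix.mul_fin_two]
    ext i j
    fin_cases i <;> fin_cases j <;>
      simp only [Matrix.cons_val', Matrix.cons_val_zero, Matrix.cons_val_one, Matrix.head_cons,
        Matrix.head_fin_const, Matrix.empty_val', Matrix.cons_val_fin_one, Matrix.one_apply,
        Fin.isValue] <;>
      simp <;>
      first
        | linear_combination e
        | ring
  · rw [show su2mat a b = !![a, b; -(starRingEnd ℂ) b, (starRingEnd ℂ) a] from rfl,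
      Matrix.det_fin_two_of]
    linear_combination e

lemma nvec_su2 (a b : ℂ) :
    nvec (su2mat a b) = ![2 * ((starRingEnd ℂ) a * b).re, -2 * ((starRingEnd ℂ) a * b).im,
      Complex.normSq a - Complex.normSq b] := by
  have key : ∀ i, nvec (su2mat a b) i = ![2 * ((starRingEnd ℂ) a * b).re,
      -2 * ((starRingEnd ℂ) a * b).im, Complex.normSq a - Complex.normSq b] i := by
    intro i
    unfold nvec
    rw [su2mat_conjT, show su2mat a b = !![a, b; -(starRingEnd ℂ) b, (starRingEnd ℂ) a] from rfl]
    fin_cases i <;>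
    · simp only [omegaMat, Matrix.cons_val_zero, Matrix.cons_val_one, Matrix.head_cons,
        Matrix.cons_val_two, Matrix.tail_cons, Matrix.cons_val_fin_one, Fin.isValue,
        Matrix.mul_fin_two, Matrix.trace_fin_two_of]
      simp [Complex.normSq_apply, Complex.ext_iff]
      ring
  funext i; exact key i

lemma part1 {U : Matrix (Fin 2) (Fin 2) ℂ} (h1 : U.conjTranspose * U = 1) (h2 : U.det = 1) :
    ∑ i : Fin 3, nvec U i ^ 2 = 1 := by
  have hf := su2_form h1 h2
  have hn := su2_normSq h1 h2
  set a := U 0 0; set b := U 0 1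
  rw [hf, nvec_su2, Fin.sum_univ_three]
  simp only [Matrix.cons_val_zero, Matrix.cons_val_one, Matrix.head_cons, Matrix.cons_val_two,
    Matrix.tail_cons]
  simp only [Complex.normSq_apply, Complex.mul_re, Complex.mul_im, Complex.conj_re,
    Complex.conj_im] at hn ⊢
  nlinarith [hn]

lemma part2 (v : Fin 3 → ℝ) (hv : ∑ i : Fin 3, v i ^ 2 = 1) :
    ∃ U : Matrix (Fin 2) (Fin 2) ℂ,
      (U.conjTranspose * U = 1 ∧ U.det = 1) ∧ nvec U = v := by
  rw [Fin.sum_univ_three] at hv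
  by_cases h2 : v 2 = -1
  · have h0 : v 0 = 0 := by nlinarith
    have h1 : v 1 = 0 := by nlinarith
    refine ⟨su2mat 0 1, su2_mem 0 1 (by simp), ?_⟩
    rw [nvec_su2]
    funext i
    fin_cases i <;> simp [h0, h1, h2]
  · have h2lt : -1 < v 2 := by
      rcases lt_or_eq_of_le (by nlinarith : -1 ≤ v 2) with h | h
      · exact h
      · exact absurd h.symm h2
    have hr0 : (0:ℝ) < (1 + v 2) / 2 := by linarith
    set r := Real.sqrt ((1 + v 2) / 2) with hrdef
    have hrpos : 0 < r := Real.sqrt_pos.2 hr0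
    have hr2 : r ^ 2 = (1 + v 2) / 2 := Real.sq_sqrt (le_of_lt hr0)
    set a : ℂ := (r : ℂ) with hadef
    set b : ℂ := ((v 0 / (2 * r) : ℝ) : ℂ) - ((v 1 / (2 * r) : ℝ) : ℂ) * Complex.I with hbdef
    have hare : a.re = r := by simp [hadef]
    have haim : a.im = 0 := by simp [hadef]
    have hbre : b.re = v 0 / (2 * r) := by
      rw [hbdef]
      simp only [Complex.sub_re, Complex.ofReal_re, Complex.mul_re, Complex.I_re, Complex.I_im,
        Complex.ofReal_im]
      ring
    have hbim : b.im = -(v 1 / (2 * r)) := by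
      rw [hbdef]
      simp only [Complex.sub_im, Complex.ofReal_im, Complex.mul_im, Complex.I_re, Complex.I_im,
        Complex.ofReal_re]
      ring
    have hrne : r ≠ 0 := ne_of_gt hrpos
    have hns : Complex.normSq a + Complex.normSq b = 1 := by
      simp only [Complex.normSq_apply, hare, haim, hbre, hbim]
      field_simp
      linear_combination (4*r^2 + 2*v 2 - 2) * hr2 + hv
    refine ⟨su2mat a b, su2_mem a b hns, ?_⟩
    rw [nvec_su2]
    funext i
    fin_cases i <;>
      simp only [Matrix.cons_val_zero, Matrix.cons_val_one, Matrix.head_cons, Matrix.cons_val_two,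
        Matrix.tail_cons, Complex.mul_re, Complex.mul_im, Complex.conj_re, Complex.conj_im,
        Complex.normSq_apply, hare, haim, hbre, hbim]
    · simp only [Fin.zero_eta, Fin.mk_one, Fin.reduceFinMk, Matrix.cons_val]; field_simp; ring
    · simp only [Fin.zero_eta, Fin.mk_one, Fin.reduceFinMk, Matrix.cons_val]; field_simp; ring
    · have hveq : v (⟨2, by norm_num⟩ : Fin 3) = v 2 := rfl
      rw [hveq]
      simp only [Fin.zero_eta, Fin.mk_one, Fin.reduceFinMk, Matrix.cons_val]
      field_simp
      linear_combination (4*(r*r) - 2*v 2 + 2) * hr2 - hv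

lemma part3 (U V : Matrix (Fin 2) (Fin 2) ℂ)
    (hU : U.conjTranspose * U = 1 ∧ U.det = 1)
    (hV : V.conjTranspose * V = 1 ∧ V.det = 1) :
    (nvec U = nvec V ↔
      ∃ θ : ℝ, V * U⁻¹ =
        Matrix.diagonal ![Complex.exp (-(θ : ℂ) * Complex.I),
          Complex.exp ((θ : ℂ) * Complex.I)]) := by
  have hUinv : U⁻¹ = U.conjTranspose := Matrix.inv_eq_left_inv hU.1
  have hfU := su2_form hU.1 hU.2
  have hfV := su2_form hV.1 hV.2
  have hnU := su2_normSq hU.1 hU.2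
  have hnV := su2_normSq hV.1 hV.2
  set a := U 0 0 with ha; set b := U 0 1 with hb
  set c := V 0 0 with hc; set d := V 0 1 with hd
  constructor
  · intro hnv
    rw [hfU, hfV, nvec_su2, nvec_su2] at hnv
    have h0 := congrFun hnv 0
    have h1 := congrFun hnv 1
    have h2 := congrFun hnv 2
    simp only [Matrix.cons_val_zero, Matrix.cons_val_one, Matrix.head_cons, Matrix.cons_val_two,
      Matrix.tail_cons] at h0 h1 h2
    -- conj a * b = conj c * d
    have hE : (starRingEnd ℂ) a * b = (starRingEnd ℂ) c * d := by
      apply Complex.ext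
      · linarith
      · linarith
    have hE' : a * (starRingEnd ℂ) b = c * (starRingEnd ℂ) d := by
      have := congrArg (starRingEnd ℂ) hE
      simpa [mul_comm] using this
    have hnac : Complex.normSq a = Complex.normSq c := by linarith
    have hnbd : Complex.normSq b = Complex.normSq d := by linarith
    have hac : a * (starRingEnd ℂ) a = c * (starRingEnd ℂ) c := by
      rw [Complex.mul_conj, Complex.mul_conj]; exact_mod_cast hnac
    have hbd : b * (starRingEnd ℂ) b = d * (starRingEnd ℂ) d := by
      rw [Complex.mul_conj, Complex.mul_conj]; exact_mod_cast hnbd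
    -- off-diagonal vanishes
    have hkey : d * a - c * b = 0 := by
      by_contra hne
      have g1 : (starRingEnd ℂ) c * (d * a - c * b) = 0 := by
        linear_combination (-a) * hE + b * hac
      have g2 : (starRingEnd ℂ) d * (d * a - c * b) = 0 := by
        linear_combination b * hE' + (-a) * hbd
      have hc0 : c = 0 := by
        have := (mul_eq_zero.mp g1).resolve_right hne
        simpa using this
      have hd0 : d = 0 := by
        have := (mul_eq_zero.mp g2).resolve_right hne
        simpa using this
      rw [hc0, hd0] at hnV
      simp at hnV
    set w := c * (starRingEnd ℂ) a + d * (starRingEnd ℂ) b with hw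
    have hW : V * U⁻¹ = !![w, 0; 0, (starRingEnd ℂ) w] := by
      rw [hUinv, hfU, hfV, su2mat_conjT,
        show su2mat c d = !![c, d; -(starRingEnd ℂ) d, (starRingEnd ℂ) c] from rfl,
        Matrix.mul_fin_two]
      have hk' : (starRingEnd ℂ) d * (starRingEnd ℂ) a - (starRingEnd ℂ) c * (starRingEnd ℂ) b
          = 0 := by
        have := congrArg (starRingEnd ℂ) hkey
        simpa using this
      ext i j
      fin_cases i <;> fin_cases j <;>
        simp [hw] <;>
        first
          | linear_combination hkey
          | linear_combination hk'
          | linear_combination -hk'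
          | ring
    have hdet : (V * U⁻¹).det = 1 := by
      rw [Matrix.det_mul, hUinv, Matrix.det_conjTranspose, hV.2, hU.2]
      simp
    rw [hW, Matrix.det_fin_two_of] at hdet
    have hwn : w * (starRingEnd ℂ) w = 1 := by linear_combination hdet
    have hwns : Complex.normSq w = 1 := by
      have := congrArg Complex.re hwn
      simpa [Complex.mul_conj] using this
    have habs : ‖w‖ = 1 := by
      have h := Complex.sq_norm w
      rw [hwns] at h
      nlinarith [norm_nonneg w]
    have hwarg : Complex.exp ((w.arg : ℂ) * Complex.I) = w := by
      have h := Complex.norm_mul_exp_arg_mul_I w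
      rw [habs] at h
      simpa using h
    have hwarg' : Complex.exp (-((w.arg : ℂ) * Complex.I)) = (starRingEnd ℂ) w := by
      have h : -((w.arg : ℂ) * Complex.I) = (starRingEnd ℂ) ((w.arg : ℂ) * Complex.I) := by
        simp [Complex.conj_I, Complex.conj_ofReal]
      rw [h, Complex.exp_conj, hwarg]
    refine ⟨-w.arg, ?_⟩
    rw [hW]
    have e1 : -(((-w.arg : ℝ)) : ℂ) * Complex.I = (w.arg : ℂ) * Complex.I := by
      push_cast; ring
    have e2 : (((-w.arg : ℝ)) : ℂ) * Complex.I = -((w.arg : ℂ) * Complex.I) := by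
      push_cast; ring
    rw [e1, e2, hwarg, hwarg']
    ext i j
    fin_cases i <;> fin_cases j <;> simp [Matrix.diagonal]
  · rintro ⟨θ, hθ⟩
    set p := Complex.exp (-(θ : ℂ) * Complex.I) with hp
    set q := Complex.exp ((θ : ℂ) * Complex.I) with hq
    have hqp : q = (starRingEnd ℂ) p := by
      rw [hp, hq, ← Complex.exp_conj]
      congr 1
      simp [Complex.conj_I, Complex.conj_ofReal]
    have hpq : (starRingEnd ℂ) p * p = 1 := by
      rw [← hqp, hq, hp, ← Complex.exp_add]
      simp
    have hVeq : V = Matrix.diagonal ![p, q] * U := by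
      calc V = V * 1 := by rw [mul_one]
        _ = V * (U⁻¹ * U) := by rw [hUinv, hU.1]
        _ = (V * U⁻¹) * U := by rw [Matrix.mul_assoc]
        _ = Matrix.diagonal ![p, q] * U := by rw [hθ]
    have hdiagmul : Matrix.diagonal ![p, q] * su2mat a b = su2mat (p * a) (p * b) := by
      ext i j
      fin_cases i <;> fin_cases j <;>
        simp [Matrix.diagonal, su2mat, Matrix.mul_apply, Fin.sum_univ_two, hqp] <;>
        ring
    have hVsu : V = su2mat (p * a) (p * b) := by
      rw [hVeq, hfU, hdiagmul]
    rw [hfU, hVsu, nvec_su2, nvec_su2]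
    have hcc : (starRingEnd ℂ) (p * a) * (p * b) = (starRingEnd ℂ) a * b := by
      rw [_root_.map_mul]
      linear_combination ((starRingEnd ℂ) a * b) * hpq
    have hnp : Complex.normSq p = 1 := by
      have := congrArg Complex.re hpq
      simpa [Complex.normSq_apply, Complex.mul_re, Complex.conj_re, Complex.conj_im] using this
    funext i
    fin_cases i <;>
      simp only [Matrix.cons_val_zero, Matrix.cons_val_one, Matrix.head_cons, Matrix.cons_val_two,
        Matrix.tail_cons, hcc, Complex.normSq_mul, hnp, one_mul]

end SU2Aux

/-- For `U ∈ SU(2)`: (1) `n(U)` is a unit vector; (2) `n` maps `SU(2)` onto the unit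
sphere `S² ⊂ ℝ³`; (3) `n(U) = n(V)` iff `V U⁻¹ = diag(e^{−iθ}, e^{iθ})` for some real `θ`.
Hence `n` induces a bijection between the right coset space `A\SU(2)`, where `A` is the
subgroup of diagonal matrices in `SU(2)`, and the unit sphere `S²`. -/
theorem stmt_19 :
    (∀ U : Matrix (Fin 2) (Fin 2) ℂ,
      U.conjTranspose * U = 1 ∧ U.det = 1 →
      ∑ i : Fin 3, nvec U i ^ 2 = 1) ∧
    (∀ v : Fin 3 → ℝ, (∑ i : Fin 3, v i ^ 2 = 1) →
      ∃ U : Matrix (Fin 2) (Fin 2) ℂ,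
        (U.conjTranspose * U = 1 ∧ U.det = 1) ∧ nvec U = v) ∧
    (∀ U V : Matrix (Fin 2) (Fin 2) ℂ,
      U.conjTranspose * U = 1 ∧ U.det = 1 →
      V.conjTranspose * V = 1 ∧ V.det = 1 →
      (nvec U = nvec V ↔
        ∃ θ : ℝ, V * U⁻¹ =
          Matrix.diagonal ![Complex.exp (-(θ : ℂ) * Complex.I),
            Complex.exp ((θ : ℂ) * Complex.I)])) := by
  refine ⟨fun U hU => part1 hU.1 hU.2, part2, part3⟩
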